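/- Let 0 < a ≤ b be real numbers and let λ ∈ [0,1]. Then exp( λ(1−λ)(a−b)²/(2b²) ) ≤ (λa + (1−λ)b)/(a^λ · b^{1−λ}) ≤ exp( λ(1−λ)(a−b)²/(2a²) ). In particular, since the left-hand side is at least 1, this refines Young's inequality a^λ b^{1−λ} ≤ λa + (1−λ)b. -/

import Mathlib

open Real

lemma fejer_key (a b l : ℝ) (ha : 0 < a) (hab : a ≤ b) (hl0 : 0 ≤ l) (hl1 : l ≤ 1) :
    l * (1 - l) * (a - b) ^ 2 / (2 * b ^ 2)
      ≤ Real.log (l * a + (1 - l) * b) - (l * Real.log a + (1 - l) * Real.log b) ∧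
    Real.log (l * a + (1 - l) * b) - (l * Real.log a + (1 - l) * Real.log b)
      ≤ l * (1 - l) * (a - b) ^ 2 / (2 * a ^ 2) := by
  have hb : 0 < b := ha.trans_le hab
  have hc : ∀ x : ℝ, 0 < x → 0 < l * x + (1 - l) * b := by
    intro x hx
    rcases le_total x b with h | h
    · nlinarith [mul_nonneg (sub_nonneg.2 hl1) (sub_nonneg.2 h)]
    · nlinarith [mul_nonneg hl0 (sub_nonneg.2 h)]
  -- derivative helpers
  have hlog : ∀ x : ℝ, 0 < x →
      HasDerivAt (fun y => Real.log (l * y + (1 - l) * b)) ((l * x + (1 - l) * b)⁻¹ * l) x := by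
    intro x hx
    have h1 : HasDerivAt (fun y : ℝ => l * y + (1 - l) * b) l x := by
      simpa using ((hasDerivAt_id x).const_mul l).add_const ((1 - l) * b)
    exact (Real.hasDerivAt_log (hc x hx).ne').comp x h1
  have hlx : ∀ x : ℝ, 0 < x → HasDerivAt (fun y => l * Real.log y) (l * x⁻¹) x := by
    intro x hx
    exact (Real.hasDerivAt_log hx.ne').const_mul l
  have hsq : ∀ x : ℝ, HasDerivAt (fun y : ℝ => (y - b) ^ 2) (2 * (x - b)) x := by
    intro x
    simpa using ((hasDerivAt_id x).sub_const b).fun_pow 2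
  constructor
  · -- lower bound, via f₁
    set f₁ : ℝ → ℝ := fun x =>
      Real.log (l * x + (1 - l) * b) - l * Real.log x - l * (1 - l) * (x - b) ^ 2 / (2 * b ^ 2)
      with hf₁
    have hder : ∀ x : ℝ, 0 < x → HasDerivAt f₁
        ((l * x + (1 - l) * b)⁻¹ * l - l * x⁻¹ - l * (1 - l) * (2 * (x - b)) / (2 * b ^ 2)) x := by
      intro x hx
      exact ((hlog x hx).sub (hlx x hx)).sub (((hsq x).const_mul (l * (1 - l))).div_const (2 * b ^ 2))
    have hant : AntitoneOn f₁ (Set.Icc a b) := by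
      apply antitoneOn_of_deriv_nonpos (convex_Icc a b)
      · intro x hx
        exact (hder x (ha.trans_le hx.1)).differentiableAt.continuousAt.continuousWithinAt
      · rw [interior_Icc]
        intro x hx
        exact (hder x (ha.trans hx.1)).differentiableAt.differentiableWithinAt
      · rw [interior_Icc]
        intro x hx
        have hx0 : 0 < x := ha.trans hx.1
        rw [(hder x hx0).deriv]
        have hcx := hc x hx0
        have hE : (l * x + (1 - l) * b)⁻¹ * l - l * x⁻¹ - l * (1 - l) * (2 * (x - b)) / (2 * b ^ 2)
            = -(l * (1 - l) * (b - x) * (b ^ 2 - (l * x + (1 - l) * b) * x)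
              / ((l * x + (1 - l) * b) * x * b ^ 2)) := by
          field_simp
          ring
        rw [hE, neg_nonpos]
        apply div_nonneg _ (by positivity)
        have h1 : (l * x + (1 - l) * b) * x ≤ b ^ 2 := by nlinarith [hx.2.le, mul_nonneg hl0 (sub_nonneg.2 hx.2.le)]
        have h2 : 0 ≤ b - x := sub_nonneg.2 hx.2.le
        have h3 : 0 ≤ 1 - l := sub_nonneg.2 hl1
        nlinarith [mul_nonneg (mul_nonneg hl0 h3) (mul_nonneg h2 (sub_nonneg.2 h1))]
    have h := hant ⟨le_refl a, hab⟩ ⟨hab, le_refl b⟩ hab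
    have hfb : f₁ b = (1 - l) * Real.log b := by
      have e1 : l * b + (1 - l) * b = b := by ring
      simp [hf₁, e1]
      ring
    rw [hfb, hf₁] at h
    simp only at h
    linarith
  · -- upper bound, via f₂
    set f₂ : ℝ → ℝ := fun x =>
      l * (1 - l) * (x - b) ^ 2 / (2 * x ^ 2) - (Real.log (l * x + (1 - l) * b) - l * Real.log x)
      with hf₂
    have hder : ∀ x : ℝ, 0 < x → HasDerivAt f₂
        ((l * (1 - l) * (2 * (x - b)) * (2 * x ^ 2) - l * (1 - l) * (x - b) ^ 2 * (2 * (2 * x)))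
            / (2 * x ^ 2) ^ 2
          - ((l * x + (1 - l) * b)⁻¹ * l - l * x⁻¹)) x := by
      intro x hx
      have hden : (2 : ℝ) * x ^ 2 ≠ 0 := by positivity
      have hq : HasDerivAt (fun y : ℝ => l * (1 - l) * (y - b) ^ 2 / (2 * y ^ 2))
          ((l * (1 - l) * (2 * (x - b)) * (2 * x ^ 2) - l * (1 - l) * (x - b) ^ 2 * (2 * (2 * x)))
            / (2 * x ^ 2) ^ 2) x := by
        have hd : HasDerivAt (fun y : ℝ => 2 * y ^ 2) (2 * (2 * x)) x := by
          simpa using ((hasDerivAt_id x).pow 2).const_mul 2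
        exact ((hsq x).const_mul (l * (1 - l))).div hd hden
      exact hq.sub ((hlog x hx).sub (hlx x hx))
    have hant : AntitoneOn f₂ (Set.Icc a b) := by
      apply antitoneOn_of_deriv_nonpos (convex_Icc a b)
      · intro x hx
        exact (hder x (ha.trans_le hx.1)).differentiableAt.continuousAt.continuousWithinAt
      · rw [interior_Icc]
        intro x hx
        exact (hder x (ha.trans hx.1)).differentiableAt.differentiableWithinAt
      · rw [interior_Icc]
        intro x hx
        have hx0 : 0 < x := ha.trans hx.1
        rw [(hder x hx0).deriv]
        have hcx := hc x hx0
        have hE : (l * (1 - l) * (2 * (x - b)) * (2 * x ^ 2) - l * (1 - l) * (x - b) ^ 2 * (2 * (2 * x)))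
              / (2 * x ^ 2) ^ 2 - ((l * x + (1 - l) * b)⁻¹ * l - l * x⁻¹)
            = -(l * (1 - l) * (b - x) * (b * (l * x + (1 - l) * b) - x ^ 2)
              / ((l * x + (1 - l) * b) * x ^ 3)) := by
          field_simp
          ring
        rw [hE, neg_nonpos]
        apply div_nonneg _ (by positivity)
        have h1 : x ^ 2 ≤ b * (l * x + (1 - l) * b) := by
          nlinarith [hx.2.le, mul_nonneg hl0 (sub_nonneg.2 hx.2.le), mul_nonneg (sub_nonneg.2 hl1) (sub_nonneg.2 hx.2.le)]
        have h2 : 0 ≤ b - x := sub_nonneg.2 hx.2.le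
        have h3 : 0 ≤ 1 - l := sub_nonneg.2 hl1
        nlinarith [mul_nonneg (mul_nonneg hl0 h3) (mul_nonneg h2 (sub_nonneg.2 h1))]
    have h := hant ⟨le_refl a, hab⟩ ⟨hab, le_refl b⟩ hab
    have hfb : f₂ b = -((1 - l) * Real.log b) := by
      have e1 : l * b + (1 - l) * b = b := by ring
      simp [hf₂, e1]
      ring
    rw [hfb, hf₂] at h
    simp only at h
    linarith

/-- Refinement and reverse of Young's inequality (3): for `0 < a ≤ b` and `λ ∈ [0,1]`,
`exp(λ(1−λ)(a−b)²/(2b²)) ≤ (λa+(1−λ)b)/(a^λ·b^{1−λ}) ≤ exp(λ(1−λ)(a−b)²/(2a²))`. -/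
theorem fejer_stmt_18 (a b : ℝ) (ha : 0 < a) (hab : a ≤ b)
    (l : ℝ) (hl : l ∈ Set.Icc (0 : ℝ) 1) :
    Real.exp (l * (1 - l) * (a - b) ^ 2 / (2 * b ^ 2))
        ≤ (l * a + (1 - l) * b) / (a ^ l * b ^ (1 - l)) ∧
    (l * a + (1 - l) * b) / (a ^ l * b ^ (1 - l))
        ≤ Real.exp (l * (1 - l) * (a - b) ^ 2 / (2 * a ^ 2)) := by
  obtain ⟨hl0, hl1⟩ := hl
  have hb : 0 < b := ha.trans_le hab
  have hnum : 0 < l * a + (1 - l) * b := by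
    rcases le_total a b with h | h
    · nlinarith [mul_nonneg (sub_nonneg.2 hl1) (sub_nonneg.2 h)]
    · nlinarith [mul_nonneg hl0 (sub_nonneg.2 h)]
  have hden : 0 < a ^ l * b ^ (1 - l) :=
    mul_pos (Real.rpow_pos_of_pos ha l) (Real.rpow_pos_of_pos hb (1 - l))
  have hratio : (l * a + (1 - l) * b) / (a ^ l * b ^ (1 - l))
      = Real.exp (Real.log (l * a + (1 - l) * b) - (l * Real.log a + (1 - l) * Real.log b)) := by
    rw [Real.exp_sub, Real.exp_log hnum]
    congr 1
    rw [show l * Real.log a + (1 - l) * Real.log b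
        = Real.log (a ^ l) + Real.log (b ^ (1 - l)) by
      rw [Real.log_rpow ha, Real.log_rpow hb],
      ← Real.log_mul (Real.rpow_pos_of_pos ha l).ne' (Real.rpow_pos_of_pos hb (1 - l)).ne',
      Real.exp_log hden]
  obtain ⟨h1, h2⟩ := fejer_key a b l ha hab hl0 hl1
  rw [hratio]
  exact ⟨Real.exp_le_exp.2 h1, Real.exp_le_exp.2 h2⟩
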